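/- arXiv:2509.19784 — 2 statements merged into one kernel-verified Lean document; each statement's English description precedes it below -/
import Mathlib

section
/- If v₁, v₂ is an orthonormal eigenbasis of the covariance matrix C with eigenvalues λ₁, λ₂, then under the control law ṗᵢ = -(e₁η₁ⁱv₁ + e₂η₂ⁱv₂) with invariant centroid, the matrix derivative satisfies Ċ v₁ = -2e₁λ₁ v₁; in particular v₁ remains an eigenvector of C along the flow. -/
open Matrix BigOperators

private lemma vmv_mulVec (a b v : Fin 2 → ℝ) :
    Matrix.vecMulVec a b *ᵥ v = (b ⬝ᵥ v) • a := by
  ext j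
  simp [Matrix.vecMulVec, Matrix.mulVec, dotProduct, Fin.sum_univ_two]
  ring

private lemma sum_mulVec' {ι : Type*} (s : Finset ι) (M : ι → Matrix (Fin 2) (Fin 2) ℝ)
    (v : Fin 2 → ℝ) : (∑ i ∈ s, M i) *ᵥ v = ∑ i ∈ s, M i *ᵥ v := by
  ext j
  simp [Matrix.mulVec, dotProduct, Matrix.sum_apply, Fin.sum_univ_two,
    Finset.sum_mul, Finset.sum_add_distrib]
  fin_cases j <;> simp [Finset.sum_add_distrib]

/-- If `v₁, v₂` is an orthonormal eigenbasis of the covariance matrix `C` with eigenvalues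
`λ₁, λ₂`, then under `ṗᵢ = -(e₁η₁ⁱv₁ + e₂η₂ⁱv₂)` with invariant centroid,
`Ċ v₁ = -2e₁λ₁ v₁`, where `Ċ = (1/N) Σᵢ (ṗᵢ zᵢᵀ + zᵢ ṗᵢᵀ)`. -/
theorem covariance_derivative_eigenvector (N : ℕ) (hN : 0 < N)
    (p : Fin N → (Fin 2 → ℝ)) (pc : Fin 2 → ℝ) (hpc : pc = (N : ℝ)⁻¹ • ∑ i, p i)
    (z : Fin N → (Fin 2 → ℝ)) (hz : ∀ i, z i = p i - pc)
    (C : Matrix (Fin 2) (Fin 2) ℝ)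
    (hC : C = (N : ℝ)⁻¹ • ∑ i, Matrix.vecMulVec (z i) (z i))
    (v1 v2 : Fin 2 → ℝ) (hv1 : v1 ⬝ᵥ v1 = 1) (hv2 : v2 ⬝ᵥ v2 = 1) (hv12 : v1 ⬝ᵥ v2 = 0)
    (lam1 lam2 e1 e2 : ℝ)
    (heig1 : C *ᵥ v1 = lam1 • v1) (heig2 : C *ᵥ v2 = lam2 • v2)
    (pdot : Fin N → (Fin 2 → ℝ))
    (hpdot : ∀ i, pdot i = -((e1 * (z i ⬝ᵥ v1)) • v1 + (e2 * (z i ⬝ᵥ v2)) • v2))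
    (Cdot : Matrix (Fin 2) (Fin 2) ℝ)
    (hCdot : Cdot = (N : ℝ)⁻¹ •
      ∑ i, (Matrix.vecMulVec (pdot i) (z i) + Matrix.vecMulVec (z i) (pdot i))) :
    Cdot *ᵥ v1 = (-2 * e1 * lam1) • v1 := by
  have hNne : (N : ℝ) ≠ 0 := Nat.cast_ne_zero.mpr hN.ne'
  have hv21 : v2 ⬝ᵥ v1 = 0 := by rw [dotProduct_comm]; exact hv12
  have hv1' : v1 0 * v1 0 + v1 1 * v1 1 = 1 := by
    simpa [dotProduct, Fin.sum_univ_two] using hv1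
  have hv12' : v1 0 * v2 0 + v1 1 * v2 1 = 0 := by
    simpa [dotProduct, Fin.sum_univ_two] using hv12
  -- key sum identity from the eigenvalue equation
  have hS : ∑ i, (z i ⬝ᵥ v1) • z i = ((N : ℝ) * lam1) • v1 := by
    have h := heig1
    rw [hC, Matrix.smul_mulVec, sum_mulVec'] at h
    simp only [vmv_mulVec] at h
    have h2 := congrArg (fun w => (N : ℝ) • w) h
    simp only [smul_smul, mul_inv_cancel₀ hNne, one_smul] at h2
    exact h2
  have hSj : ∀ j, ∑ i, (z i ⬝ᵥ v1) * z i j = (N : ℝ) * lam1 * v1 j := by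
    intro j
    have h := congrFun hS j
    simpa [Finset.sum_apply] using h
  have sAA : ∑ i, (z i ⬝ᵥ v1) * (z i ⬝ᵥ v1) = (N : ℝ) * lam1 := by
    have e : ∀ i : Fin N, (z i ⬝ᵥ v1) * (z i ⬝ᵥ v1)
        = (z i ⬝ᵥ v1) * z i 0 * v1 0 + (z i ⬝ᵥ v1) * z i 1 * v1 1 := by
      intro i
      simp [dotProduct, Fin.sum_univ_two]
      ring
    rw [Finset.sum_congr rfl (fun i _ => e i), Finset.sum_add_distrib,
      ← Finset.sum_mul, ← Finset.sum_mul, hSj 0, hSj 1]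
    linear_combination ((N : ℝ) * lam1) * hv1'
  have sAB : ∑ i, (z i ⬝ᵥ v1) * (z i ⬝ᵥ v2) = 0 := by
    have e : ∀ i : Fin N, (z i ⬝ᵥ v1) * (z i ⬝ᵥ v2)
        = (z i ⬝ᵥ v1) * z i 0 * v2 0 + (z i ⬝ᵥ v1) * z i 1 * v2 1 := by
      intro i
      simp [dotProduct, Fin.sum_univ_two]
      ring
    rw [Finset.sum_congr rfl (fun i _ => e i), Finset.sum_add_distrib,
      ← Finset.sum_mul, ← Finset.sum_mul, hSj 0, hSj 1]
    linear_combination ((N : ℝ) * lam1) * hv12'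
  have h2 : ∀ i, pdot i ⬝ᵥ v1 = -(e1 * (z i ⬝ᵥ v1)) := by
    intro i
    rw [hpdot]
    simp [neg_dotProduct, add_dotProduct, smul_dotProduct, hv1, hv21,
      smul_eq_mul]
  have hsum : ∀ i, (Matrix.vecMulVec (pdot i) (z i) + Matrix.vecMulVec (z i) (pdot i)) *ᵥ v1
      = (-(e1 * ((z i ⬝ᵥ v1) * (z i ⬝ᵥ v1)))) • v1
        + (-(e2 * ((z i ⬝ᵥ v1) * (z i ⬝ᵥ v2)))) • v2
        + (-e1) • ((z i ⬝ᵥ v1) • z i) := by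
    intro i
    rw [Matrix.add_mulVec, vmv_mulVec, vmv_mulVec, h2 i, hpdot i]
    ext j
    simp only [Pi.add_apply, Pi.smul_apply, Pi.neg_apply, smul_eq_mul]
    ring
  rw [hCdot, Matrix.smul_mulVec, sum_mulVec']
  simp only [hsum, Finset.sum_add_distrib]
  have hA : ∑ i, -(e1 * ((z i ⬝ᵥ v1) * (z i ⬝ᵥ v1))) = -(e1 * ((N : ℝ) * lam1)) := by
    have : ∑ i, -(e1 * ((z i ⬝ᵥ v1) * (z i ⬝ᵥ v1)))
        = -e1 * ∑ i, (z i ⬝ᵥ v1) * (z i ⬝ᵥ v1) := by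
      rw [Finset.mul_sum]
      exact Finset.sum_congr rfl fun i _ => by ring
    rw [this, sAA]; ring
  have hB : ∑ i, -(e2 * ((z i ⬝ᵥ v1) * (z i ⬝ᵥ v2))) = 0 := by
    have : ∑ i, -(e2 * ((z i ⬝ᵥ v1) * (z i ⬝ᵥ v2)))
        = -e2 * ∑ i, (z i ⬝ᵥ v1) * (z i ⬝ᵥ v2) := by
      rw [Finset.mul_sum]
      exact Finset.sum_congr rfl fun i _ => by ring
    rw [this, sAB]; ring
  rw [← Finset.sum_smul, ← Finset.sum_smul, hA, hB]
  have hC3 : ∑ i, (z i ⬝ᵥ v1) • z i = ((N : ℝ) * lam1) • v1 := hS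
  rw [← Finset.smul_sum, hC3]
  ext j
  simp only [Pi.smul_apply, Pi.add_apply, smul_eq_mul]
  field_simp
  ring
end

section
/- Consider the consensus estimator x̂̇ = -L x̂ + L x on ℝᴺ, where L = BBᵀ is the Laplacian of a connected undirected graph and x ∈ ℝᴺ is constant. If 1ᵀ x̂(0) = 0, then x̂(t) converges exponentially to x - (1ᵀx/N)1, i.e., to the vector of deviations of x from its average. -/
open Matrix BigOperators Real


lemma consensus_aux_posdef {N E : ℕ} (B : Matrix (Fin N) (Fin E) ℝ)
    (L : Matrix (Fin N) (Fin N) ℝ) (hL : L = B * Bᵀ)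
    (hker : ∀ y : Fin N → ℝ, L *ᵥ y = 0 ↔ ∃ c : ℝ, y = fun _ => c) :
    ∃ μ : ℝ, 0 < μ ∧ ∀ z : Fin N → ℝ, (∑ i, z i = 0) →
      μ * ∑ i, (z i)^2 ≤ ∑ i, z i * (L *ᵥ z) i := by
  set q : (Fin N → ℝ) → ℝ := fun z => ∑ i, z i * (L *ᵥ z) i with hq
  have q_eq : ∀ z : Fin N → ℝ, q z = ∑ e, ((Bᵀ *ᵥ z) e)^2 := by
    intro z
    have h1 : q z = z ⬝ᵥ (L *ᵥ z) := rfl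
    rw [h1, hL, ← Matrix.mulVec_mulVec, Matrix.dotProduct_mulVec, ← Matrix.mulVec_transpose]
    simp [dotProduct, sq]
  have q_nonneg : ∀ z, 0 ≤ q z := by
    intro z; rw [q_eq]; positivity
  have q_zero : ∀ z : Fin N → ℝ, (∑ i, z i = 0) → q z = 0 → z = 0 := by
    intro z hsum hqz
    rw [q_eq] at hqz
    have hw : Bᵀ *ᵥ z = 0 := by
      funext e
      have := (Finset.sum_eq_zero_iff_of_nonneg (fun e _ => sq_nonneg ((Bᵀ *ᵥ z) e))).1 hqz e
        (Finset.mem_univ e)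
      exact pow_eq_zero_iff (n := 2) (by norm_num) |>.1 this
    have hLz : L *ᵥ z = 0 := by
      rw [hL, ← Matrix.mulVec_mulVec, hw, Matrix.mulVec_zero]
    obtain ⟨c, hc⟩ := (hker z).1 hLz
    subst hc
    have : (N : ℝ) * c = 0 := by simpa using hsum
    rcases mul_eq_zero.1 this with h | h
    · -- N = 0 : Fin N empty, z = 0 anyway
      have hN0 : N = 0 := by exact_mod_cast h
      subst hN0; funext i; exact absurd i.2 (by omega)
    · funext i; simp [h]
  -- scaling
  have q_smul : ∀ (c : ℝ) (z : Fin N → ℝ), q (c • z) = c^2 * q z := by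
    intro c z
    simp only [hq, Matrix.mulVec_smul, Pi.smul_apply, smul_eq_mul, Finset.mul_sum]
    congr 1; funext i; ring
  set s : Set (Fin N → ℝ) := {z | (∑ i, z i = 0) ∧ ∑ i, (z i)^2 = 1} with hs
  by_cases hne : s.Nonempty
  · have hclosed : IsClosed s := by
      have h1 : Continuous (fun z : Fin N → ℝ => ∑ i, z i) := by
        exact continuous_finset_sum _ fun i _ => continuous_apply i
      have h2 : Continuous (fun z : Fin N → ℝ => ∑ i, (z i)^2) := by
        exact continuous_finset_sum _ fun i _ => (continuous_apply i).pow 2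
      exact (isClosed_singleton.preimage h1).inter
        ((isClosed_singleton.preimage h2).mono le_rfl) |>.mono le_rfl
    have hbdd : Bornology.IsBounded s := by
      apply Metric.isBounded_iff_subset_closedBall (0 : Fin N → ℝ) |>.2
      refine ⟨1, fun z hz => ?_⟩
      simp only [Metric.mem_closedBall, dist_zero_right]
      refine (pi_norm_le_iff_of_nonneg zero_le_one).2 fun i => ?_
      have hle : (z i)^2 ≤ 1 := by
        rw [← hz.2]
        exact Finset.single_le_sum (fun j _ => sq_nonneg (z j)) (Finset.mem_univ i)
      have := (sq_le_one_iff_abs_le_one _).1 hle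
      simpa [Real.norm_eq_abs] using this
    have hcomp : IsCompact s := Metric.isCompact_of_isClosed_isBounded hclosed hbdd
    have hqcont : Continuous q := by
      apply continuous_finset_sum
      intro i _
      have heq : (fun z : Fin N → ℝ => (L *ᵥ z) i) = fun z => ∑ j, L i j * z j := rfl
      exact (continuous_apply i).mul
        (by rw [heq]; exact continuous_finset_sum _ fun j _ => (continuous_const.mul (continuous_apply j)))
    obtain ⟨z0, hz0s, hmin⟩ := hcomp.exists_isMinOn hne hqcont.continuousOn
    have hz0ne : z0 ≠ 0 := by
      intro h
      obtain ⟨-, h2⟩ := hz0s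
      rw [h] at h2
      simp at h2
    have hμpos : 0 < q z0 := by
      rcases lt_or_eq_of_le (q_nonneg z0) with h | h
      · exact h
      · exact absurd (q_zero z0 hz0s.1 h.symm) hz0ne
    refine ⟨q z0, hμpos, fun z hzsum => ?_⟩
    by_cases hz2 : ∑ i, (z i)^2 = 0
    · rw [hz2, mul_zero]; exact q_nonneg z
    · have hz2pos : 0 < ∑ i, (z i)^2 :=
        lt_of_le_of_ne (Finset.sum_nonneg fun i _ => sq_nonneg _) (Ne.symm hz2)
      set r : ℝ := Real.sqrt (∑ i, (z i)^2) with hr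
      have hrpos : 0 < r := Real.sqrt_pos.2 hz2pos
      have hr2 : r^2 = ∑ i, (z i)^2 := Real.sq_sqrt hz2pos.le
      have hmem : r⁻¹ • z ∈ s := by
        constructor
        · simp only [Pi.smul_apply, smul_eq_mul, ← Finset.mul_sum, hzsum, mul_zero]
        · have : ∑ i, ((r⁻¹ • z) i)^2 = r⁻¹^2 * ∑ i, (z i)^2 := by
            simp only [Pi.smul_apply, smul_eq_mul, Finset.mul_sum]; congr 1; funext i; ring
          rw [this, ← hr2]; field_simp
      have hle2 : q z0 ≤ q (r⁻¹ • z) := hmin hmem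
      have hqs : q (r⁻¹ • z) = r⁻¹^2 * q z := q_smul _ _
      rw [hqs] at hle2
      have hfin : r^2 * q z0 ≤ q z := by
        calc r^2 * q z0 ≤ r^2 * (r⁻¹^2 * q z) :=
              mul_le_mul_of_nonneg_left hle2 (sq_nonneg r)
          _ = q z := by field_simp
      show q z0 * ∑ i, (z i)^2 ≤ q z
      calc q z0 * ∑ i, (z i)^2 = r^2 * q z0 := by rw [hr2]; ring
        _ ≤ q z := hfin
  · -- s empty : every z with sum zero is zero
    refine ⟨1, one_pos, fun z hzsum => ?_⟩
    have hz2 : ∑ i, (z i)^2 = 0 := by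
      by_contra hz2
      have hz2pos : 0 < ∑ i, (z i)^2 :=
        lt_of_le_of_ne (Finset.sum_nonneg fun i _ => sq_nonneg _) (Ne.symm hz2)
      set r : ℝ := Real.sqrt (∑ i, (z i)^2) with hr
      have hrpos : 0 < r := Real.sqrt_pos.2 hz2pos
      have hr2 : r^2 = ∑ i, (z i)^2 := Real.sq_sqrt hz2pos.le
      apply hne
      refine ⟨r⁻¹ • z, ?_, ?_⟩
      · simp only [Pi.smul_apply, smul_eq_mul, ← Finset.mul_sum, hzsum, mul_zero]
      · have : ∑ i, ((r⁻¹ • z) i)^2 = r⁻¹^2 * ∑ i, (z i)^2 := by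
          simp only [Pi.smul_apply, smul_eq_mul, Finset.mul_sum]; congr 1; funext i; ring
        rw [this, ← hr2]; field_simp
    rw [hz2, mul_zero]; exact q_nonneg z

/-- For the consensus estimator `x̂̇ = -L(x̂ - x)` on `ℝᴺ`, where `L` is the Laplacian of a
connected undirected graph (symmetric PSD with kernel spanned by the all-ones vector) and
`x` is constant: if `1ᵀx̂(0) = 0`, then `x̂(t)` converges exponentially to
`x - (1ᵀx/N)·1`, the vector of deviations of `x` from its average. -/
theorem consensus_estimator_convergence (N E : ℕ) (hN : 0 < N)
    (B : Matrix (Fin N) (Fin E) ℝ) (L : Matrix (Fin N) (Fin N) ℝ)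
    (hL : L = B * Bᵀ)
    (hker : ∀ y : Fin N → ℝ, L *ᵥ y = 0 ↔ ∃ c : ℝ, y = fun _ => c)
    (x : Fin N → ℝ) (xhat : ℝ → (Fin N → ℝ))
    (hode : ∀ t : ℝ, HasDerivAt xhat (-(L *ᵥ (xhat t - x))) t)
    (hinit : ∑ i, xhat 0 i = 0) :
    ∃ K c : ℝ, 0 < K ∧ 0 < c ∧ ∀ t : ℝ, 0 ≤ t →
      ‖xhat t - (x - ((∑ i, x i) / N) • (fun _ => (1 : ℝ)))‖ ≤ K * exp (-c * t) := by
  obtain ⟨μ, hμ, hqbound⟩ := consensus_aux_posdef B L hL hker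
  have hNne : (N : ℝ) ≠ 0 := Nat.cast_ne_zero.2 hN.ne'
  set a : ℝ := (∑ i, x i) / N with ha
  set xbar : Fin N → ℝ := x - a • (fun _ => (1 : ℝ)) with hxbar
  set z : ℝ → (Fin N → ℝ) := fun t => xhat t - xbar with hz
  have hLa : L *ᵥ (fun _ => a) = 0 := (hker _).2 ⟨a, rfl⟩
  -- derivative of z
  have hzderiv : ∀ t, HasDerivAt z (-(L *ᵥ z t)) t := by
    intro t
    have h1 : HasDerivAt z (-(L *ᵥ (xhat t - x))) t := (hode t).sub_const xbar
    have h2 : xhat t - x = z t - (fun _ => a) := by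
      funext i
      simp [hz, hxbar, Pi.sub_apply]
      ring
    rw [h2, Matrix.mulVec_sub, hLa, sub_zero] at h1
    exact h1
  have hzd : ∀ t i, HasDerivAt (fun t => z t i) (-(L *ᵥ z t) i) t :=
    fun t i => hasDerivAt_pi.1 (hzderiv t) i
  -- column sums of L vanish
  have hsym : ∀ i j, L i j = L j i := by
    intro i j; rw [hL]; simp [Matrix.mul_apply, Matrix.transpose_apply, mul_comm]
  have hrow : ∀ j, ∑ i, L j i = 0 := by
    intro j
    have h1 := congrFun ((hker (fun _ => (1:ℝ))).2 ⟨1, rfl⟩) j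
    simpa [Matrix.mulVec, dotProduct] using h1
  have hsumLv : ∀ v : Fin N → ℝ, ∑ i, (L *ᵥ v) i = 0 := by
    intro v
    simp only [Matrix.mulVec, dotProduct]
    rw [Finset.sum_comm]
    apply Finset.sum_eq_zero
    intro j _
    rw [← Finset.sum_mul]
    have : ∑ i, L i j = 0 := by
      rw [Finset.sum_congr rfl (fun i _ => hsym i j)]
      exact hrow j
    rw [this, zero_mul]
  -- the sum of z is conserved and equals 0
  have hS : ∀ t, ∑ i, z t i = 0 := by
    have hSd : ∀ t, HasDerivAt (fun t => ∑ i, z t i) 0 t := by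
      intro t
      have h := HasDerivAt.fun_sum (fun i (_ : i ∈ Finset.univ) => hzd t i)
      have he : ∑ i, -(L *ᵥ z t) i = 0 := by
        rw [Finset.sum_neg_distrib, hsumLv, neg_zero]
      rwa [he] at h
    have hdiff : Differentiable ℝ (fun t => ∑ i, z t i) :=
      fun t => (hSd t).differentiableAt
    have hconst := is_const_of_deriv_eq_zero hdiff (fun t => (hSd t).deriv)
    have hS0 : ∑ i, z 0 i = 0 := by
      simp only [hz, Pi.sub_apply, hxbar, Pi.smul_apply, smul_eq_mul, mul_one]
      rw [Finset.sum_sub_distrib, Finset.sum_sub_distrib, hinit, Finset.sum_const]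
      simp only [Finset.card_univ, Fintype.card_fin, nsmul_eq_mul, ha]
      field_simp
      ring
    intro t
    rw [hconst t 0, hS0]
  -- g = squared norm of z
  set g : ℝ → ℝ := fun t => ∑ i, (z t i)^2 with hg
  have hgnonneg : ∀ t, 0 ≤ g t := fun t => Finset.sum_nonneg fun i _ => sq_nonneg _
  have hgd : ∀ t, HasDerivAt g (-(2 * ∑ i, z t i * (L *ᵥ z t) i)) t := by
    intro t
    have h := HasDerivAt.fun_sum (fun i (_ : i ∈ Finset.univ) => (hzd t i).pow 2)
    have he : ∑ i, ((2:ℕ):ℝ) * z t i ^ (2-1) * (-(L *ᵥ z t) i)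
        = -(2 * ∑ i, z t i * (L *ᵥ z t) i) := by
      rw [Finset.mul_sum, ← Finset.sum_neg_distrib]
      apply Finset.sum_congr rfl
      intro i _
      push_cast
      ring
    rwa [he] at h
  -- h = exp(2μt) * g t is antitone
  set h : ℝ → ℝ := fun t => exp (2*μ*t) * g t with hh
  have hhd : ∀ t, HasDerivAt h
      (exp (2*μ*t) * (2*μ) * g t + exp (2*μ*t) * (-(2 * ∑ i, z t i * (L *ᵥ z t) i))) t := by
    intro t
    have h1 : HasDerivAt (fun t : ℝ => exp (2*μ*t)) (exp (2*μ*t) * (2*μ)) t := by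
      have := ((hasDerivAt_id t).const_mul (2*μ)).exp
      simpa using this
    exact h1.mul (hgd t)
  have hanti : Antitone h := by
    apply antitone_of_deriv_nonpos (fun t => (hhd t).differentiableAt)
    intro t
    rw [(hhd t).deriv]
    have hq := hqbound (z t) (hS t)
    have hexp : 0 < exp (2*μ*t) := Real.exp_pos _
    nlinarith [hq, hexp, hgnonneg t]
  -- conclude
  refine ⟨Real.sqrt (g 0) + 1, μ, by positivity, hμ, fun t ht => ?_⟩
  have hgt : g t ≤ exp (-(2*μ)*t) * g 0 := by
    have h1 : h t ≤ h 0 := hanti ht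
    have h2 : h 0 = g 0 := by simp [hh]
    rw [h2] at h1
    have h3 : g t = exp (-(2*μ)*t) * h t := by
      simp only [hh, ← mul_assoc, ← Real.exp_add]
      ring_nf
      simp
    rw [h3]
    exact mul_le_mul_of_nonneg_left h1 (Real.exp_pos _).le
  have hKpos : (0:ℝ) < Real.sqrt (g 0) + 1 := by positivity
  show ‖z t‖ ≤ (Real.sqrt (g 0) + 1) * exp (-μ * t)
  have hrhs : 0 ≤ (Real.sqrt (g 0) + 1) * exp (-μ * t) := by positivity
  refine (pi_norm_le_iff_of_nonneg hrhs).2 fun i => ?_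
  have h1 : (z t i)^2 ≤ g t :=
    Finset.single_le_sum (fun j _ => sq_nonneg (z t j)) (Finset.mem_univ i)
  have h2 : |z t i| ≤ Real.sqrt (g t) := by
    rw [← Real.sqrt_sq_eq_abs]
    exact Real.sqrt_le_sqrt h1
  have h3 : Real.sqrt (g t) ≤ Real.sqrt (g 0) * exp (-μ * t) := by
    have h4 : Real.sqrt (exp (-(2*μ)*t) * g 0) = exp (-μ*t) * Real.sqrt (g 0) := by
      rw [show exp (-(2*μ)*t) = (exp (-μ*t))^2 by
        rw [← Real.exp_nat_mul]; norm_num; ring_nf]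
      rw [Real.sqrt_mul (sq_nonneg _), Real.sqrt_sq (Real.exp_pos _).le]
    calc Real.sqrt (g t) ≤ Real.sqrt (exp (-(2*μ)*t) * g 0) := Real.sqrt_le_sqrt hgt
      _ = exp (-μ*t) * Real.sqrt (g 0) := h4
      _ = Real.sqrt (g 0) * exp (-μ*t) := mul_comm _ _
  have h5 : Real.sqrt (g 0) * exp (-μ*t) ≤ (Real.sqrt (g 0) + 1) * exp (-μ*t) := by
    have := (Real.exp_pos (-μ*t)).le
    nlinarith [Real.sqrt_nonneg (g 0)]
  calc ‖z t i‖ = |z t i| := Real.norm_eq_abs _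
    _ ≤ Real.sqrt (g t) := h2
    _ ≤ Real.sqrt (g 0) * exp (-μ*t) := h3
    _ ≤ (Real.sqrt (g 0) + 1) * exp (-μ*t) := h5
end
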